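/- Let K₀⁽¹⁾, K₁⁽¹⁾ and K₀^{(j)}, K₁^{(j)} for j = 2,…,N be self-adjoint operators on finite-dimensional Hilbert spaces with (K_x^{(j)})² ≤ I for all j, x. Then the star-graph dual Bell operator B' := (N−1)(K₀⁽¹⁾ − K₁⁽¹⁾) ⊗ ⊗_{j≥2} K₁^{(j)} − Σ_{j≥2} (K₀⁽¹⁾ + K₁⁽¹⁾) ⊗ K₀^{(j)} (acting on the appropriate tensor factors, with identity elsewhere) satisfies −2√2(N−1)·I ≤ B' ≤ 2√2(N−1)·I. -/

import Mathlib

open Matrix ComplexOrder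

noncomputable section

/-- The Kronecker (tensor) product of a family of square matrices, one per
tensor factor: the `(y, x)` entry is `∏ j, (M j) (y j) (x j)`. -/
def famKron {n : ℕ} {d : Fin n → ℕ}
    (M : (j : Fin n) → Matrix (Fin (d j)) (Fin (d j)) ℂ) :
    Matrix ((j : Fin n) → Fin (d j)) ((j : Fin n) → Fin (d j)) ℂ :=
  fun y x => ∏ j, M j (y j) (x j)

namespace SDB

variable {m : ℕ} {d : Fin m → ℕ}

lemma famKron_mul (M N : (j : Fin m) → Matrix (Fin (d j)) (Fin (d j)) ℂ) :
    famKron M * famKron N = famKron (fun j => M j * N j) := by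
  ext y x
  simp only [famKron, Matrix.mul_apply]
  rw [Fintype.prod_sum (fun j t => M j (y j) t * N j t (x j))]
  exact Finset.sum_congr rfl fun z _ => (Finset.prod_mul_distrib).symm

lemma famKron_conjTranspose (M : (j : Fin m) → Matrix (Fin (d j)) (Fin (d j)) ℂ) :
    (famKron M)ᴴ = famKron (fun j => (M j)ᴴ) := by
  ext y x
  simp [famKron, conjTranspose_apply, map_prod]

lemma famKron_isHermitian {M : (j : Fin m) → Matrix (Fin (d j)) (Fin (d j)) ℂ}
    (h : ∀ j, (M j).IsHermitian) : (famKron M).IsHermitian := by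
  rw [Matrix.IsHermitian, famKron_conjTranspose]
  exact congrArg famKron (funext fun j => h j)

lemma famKron_one : famKron (fun j : Fin m => (1 : Matrix (Fin (d j)) (Fin (d j)) ℂ)) = 1 := by
  ext y x
  by_cases h : y = x
  · subst h
    simp [famKron, Matrix.one_apply]
  · obtain ⟨j, hj⟩ := Function.ne_iff.mp h
    rw [Matrix.one_apply_ne h]
    exact Finset.prod_eq_zero (Finset.mem_univ j) (Matrix.one_apply_ne hj)

lemma famKron_posSemidef {M : (j : Fin m) → Matrix (Fin (d j)) (Fin (d j)) ℂ}
    (h : ∀ j, (M j).PosSemidef) : (famKron M).PosSemidef := by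
  choose C hC using fun j => (by
    open scoped MatrixOrder Matrix.Norms.L2Operator in
    obtain ⟨B, hB⟩ := CStarAlgebra.nonneg_iff_eq_star_mul_self.mp (h j).nonneg
    exact ⟨B, by rw [hB, star_eq_conjTranspose]⟩ : ∃ B : Matrix (Fin (d j)) (Fin (d j)) ℂ, M j = Bᴴ * B)
  have : famKron M = (famKron C)ᴴ * famKron C := by
    rw [famKron_conjTranspose, famKron_mul]
    exact congrArg famKron (funext fun j => hC j)
  rw [this]
  exact Matrix.posSemidef_conjTranspose_mul_self _

lemma famKron_update_apply
    (F : (j : Fin m) → Matrix (Fin (d j)) (Fin (d j)) ℂ) (j : Fin m)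
    (X : Matrix (Fin (d j)) (Fin (d j)) ℂ) (y x : (j : Fin m) → Fin (d j)) :
    famKron (Function.update F j X) y x
      = X (y j) (x j) * ∏ i ∈ Finset.univ.erase j, F i (y i) (x i) := by
  have hg : (fun i => (Function.update F j X i) (y i) (x i))
      = Function.update (fun i => F i (y i) (x i)) j (X (y j) (x j)) := by
    funext i
    by_cases hij : i = j
    · subst hij; simp
    · simp [Function.update_of_ne hij]
  rw [famKron, hg, ← Finset.mul_prod_erase Finset.univ _ (Finset.mem_univ j),
    Function.update_self]
  congr 1
  exact Finset.prod_congr rfl fun i hi =>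
    by rw [Function.update_of_ne (Finset.ne_of_mem_erase hi)]

lemma famKron_update_sub
    (F : (j : Fin m) → Matrix (Fin (d j)) (Fin (d j)) ℂ) (j : Fin m)
    (X Y : Matrix (Fin (d j)) (Fin (d j)) ℂ) :
    famKron (Function.update F j (X - Y))
      = famKron (Function.update F j X) - famKron (Function.update F j Y) := by
  ext y x
  simp [famKron_update_apply, Matrix.sub_apply, sub_mul]

lemma posSemidef_sum {ι : Type*} {N : Type*} [Fintype N] (s : Finset ι)
    (f : ι → Matrix N N ℂ) (h : ∀ i ∈ s, (f i).PosSemidef) :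
    (∑ i ∈ s, f i).PosSemidef := by
  induction s using Finset.cons_induction with
  | empty => simpa using Matrix.PosSemidef.zero
  | cons a s ha ih =>
      rw [Finset.sum_cons]
      exact (h a (Finset.mem_cons_self a s)).add
        (ih fun i hi => h i (Finset.mem_cons_of_mem hi))

lemma famKron_mono {M N : (j : Fin m) → Matrix (Fin (d j)) (Fin (d j)) ℂ}
    (hM : ∀ j, (M j).PosSemidef) (hMN : ∀ j, (N j - M j).PosSemidef) :
    (famKron N - famKron M).PosSemidef := by
  have hN : ∀ j, (N j).PosSemidef := fun j => by
    simpa using (hMN j).add (hM j)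
  set H : ℕ → Matrix _ _ ℂ :=
    fun k => famKron (fun i => if (i : ℕ) < k then M i else N i) with hH
  have h0 : H 0 = famKron N := by
    simp only [hH]
    exact congrArg famKron (funext fun i => by simp)
  have hm : H m = famKron M := by
    simp only [hH]
    exact congrArg famKron (funext fun i => by simp [i.isLt])
  have key : ∀ k, (H k - H (k + 1)).PosSemidef := by
    intro k
    by_cases hk : k < m
    · set j : Fin m := ⟨k, hk⟩ with hj
      set base : (i : Fin m) → Matrix (Fin (d i)) (Fin (d i)) ℂ :=
        fun i => if (i : ℕ) < k then M i else N i with hbase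
      have e1 : H k = famKron (Function.update base j (N j)) := by
        simp only [hH]
        refine congrArg famKron (funext fun i => ?_)
        by_cases hij : i = j
        · subst hij; simp [hbase, hj]
        · rw [Function.update_of_ne hij]
      have e2 : H (k + 1) = famKron (Function.update base j (M j)) := by
        simp only [hH]
        refine congrArg famKron (funext fun i => ?_)
        by_cases hij : i = j
        · subst hij; simp [hj]
        · rw [Function.update_of_ne hij, hbase]
          have hiff : (i : ℕ) < k + 1 ↔ (i : ℕ) < k := by
            constructor
            · intro h'
              rcases Nat.lt_succ_iff_lt_or_eq.mp h' with h'' | h''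
              · exact h''
              · exact absurd (Fin.ext h'' : i = j) hij
            · exact fun h'' => Nat.lt_succ_of_lt h''
          simp only [hiff]
      rw [e1, e2, ← famKron_update_sub]
      apply famKron_posSemidef
      intro i
      by_cases hij : i = j
      · subst hij; simpa using hMN j
      · rw [Function.update_of_ne hij, hbase]
        dsimp only
        split
        · exact hM i
        · exact hN i
    · have heq : H (k + 1) = H k := by
        simp only [hH]
        refine congrArg famKron (funext fun i => ?_)
        have h1 : (i : ℕ) < k := lt_of_lt_of_le i.isLt (le_of_not_gt hk)
        simp [h1, Nat.lt_succ_of_lt h1]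
      rw [heq, sub_self]
      exact Matrix.PosSemidef.zero
  have tele : famKron N - famKron M = ∑ k ∈ Finset.range m, (H k - H (k + 1)) := by
    rw [Finset.sum_range_sub' H m, h0, hm]
  rw [tele]
  exact posSemidef_sum _ _ fun k _ => key k

lemma posSemidef_real_smul {N : Type*} [Fintype N] {M : Matrix N N ℂ}
    (hM : M.PosSemidef) {r : ℝ} (hr : 0 ≤ r) : (((r : ℂ)) • M).PosSemidef := by
  constructor
  · have h1 : ((r : ℂ) • M)ᴴ = star (r : ℂ) • Mᴴ := by simp
    rw [Matrix.IsHermitian, h1, hM.1.eq, Complex.star_def, Complex.conj_ofReal]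
  · exact (hM.smul (a := (r : ℂ)) (Complex.zero_le_real.mpr hr)).2

lemma herm_sq_psd {N : Type*} [Fintype N] {M : Matrix N N ℂ} (h : M.IsHermitian) :
    (M * M).PosSemidef := by
  have := Matrix.posSemidef_conjTranspose_mul_self M
  rwa [h.eq] at this


section cases

variable {m : ℕ} {e : Fin (m + 1) → ℕ}

lemma famKron_cases_apply (X : Matrix (Fin (e 0)) (Fin (e 0)) ℂ)
    (f : (i : Fin m) → Matrix (Fin (e i.succ)) (Fin (e i.succ)) ℂ)
    (y x : (j : Fin (m + 1)) → Fin (e j)) :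
    famKron (Fin.cases X f) y x
      = X (y 0) (x 0) * ∏ i : Fin m, f i (y i.succ) (x i.succ) := by
  rw [famKron, Fin.prod_univ_succ]
  rfl

lemma famKron_cases_sub (X Y : Matrix (Fin (e 0)) (Fin (e 0)) ℂ)
    (f : (i : Fin m) → Matrix (Fin (e i.succ)) (Fin (e i.succ)) ℂ) :
    famKron (Fin.cases (X - Y) f)
      = famKron (Fin.cases X f) - famKron (Fin.cases Y f) := by
  ext y x
  simp [famKron_cases_apply, Matrix.sub_apply, sub_mul]

lemma famKron_cases_smul (c : ℂ) (X : Matrix (Fin (e 0)) (Fin (e 0)) ℂ)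
    (f : (i : Fin m) → Matrix (Fin (e i.succ)) (Fin (e i.succ)) ℂ) :
    famKron (Fin.cases (c • X) f) = c • famKron (Fin.cases X f) := by
  ext y x
  simp [famKron_cases_apply, Matrix.smul_apply, mul_assoc]

lemma one_eq_famKron_cases :
    (1 : Matrix ((j : Fin (m + 1)) → Fin (e j)) ((j : Fin (m + 1)) → Fin (e j)) ℂ)
      = famKron (Fin.cases 1 fun _ => 1) := by
  rw [← famKron_one]
  exact congrArg famKron (funext fun j => by
    induction j using Fin.cases <;> simp)

end cases

end SDB

/-- the star-graph dual Bell operator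
`B' = (N−1)(K₀⁽¹⁾−K₁⁽¹⁾)⊗⊗_{j≥2}K₁^{(j)} − Σ_{j≥2}(K₀⁽¹⁾+K₁⁽¹⁾)⊗K₀^{(j)}`
(identity on unlisted factors) built from dichotomic-norm operators
(`K` self-adjoint with `K² ≤ I`) satisfies `−2√2(N−1)·I ≤ B' ≤ 2√2(N−1)·I`. -/
theorem star_dual_bell_operator_bound
    {n : ℕ} {d : Fin (n + 1) → ℕ}
    (K : (j : Fin (n + 1)) → Fin 2 → Matrix (Fin (d j)) (Fin (d j)) ℂ)
    (hherm : ∀ j x, (K j x).IsHermitian)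
    (hsq : ∀ j x, (1 - K j x * K j x).PosSemidef) :
    letI B' : Matrix ((j : Fin (n + 1)) → Fin (d j))
        ((j : Fin (n + 1)) → Fin (d j)) ℂ :=
      (n : ℂ) • famKron (Fin.cases (K 0 0 - K 0 1) (fun i => K i.succ 1))
        - ∑ j : Fin n,
            famKron (Fin.cases (K 0 0 + K 0 1)
              (fun i => if i = j then K i.succ 0 else 1))
    (((2 * Real.sqrt 2 * n : ℝ) : ℂ) • (1 : Matrix _ _ ℂ) - B').PosSemidef ∧
    (B' + ((2 * Real.sqrt 2 * n : ℝ) : ℂ) • (1 : Matrix _ _ ℂ)).PosSemidef := by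
  classical
  set A := K 0 0 - K 0 1 with hA
  set S := K 0 0 + K 0 1 with hS
  set G := famKron (Fin.cases A fun i => K i.succ 1) with hG
  set P : Fin n → Matrix ((j : Fin (n + 1)) → Fin (d j))
      ((j : Fin (n + 1)) → Fin (d j)) ℂ :=
    fun j => famKron (Fin.cases S fun i => if i = j then K i.succ 0 else 1) with hP
  set B' := (n : ℂ) • G - ∑ j, P j with hB'
  have hAh : A.IsHermitian := (hherm 0 0).sub (hherm 0 1)
  have hSh : S.IsHermitian := (hherm 0 0).add (hherm 0 1)
  have hGh : G.IsHermitian := by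
    apply SDB.famKron_isHermitian
    intro j
    induction j using Fin.cases with
    | zero => simpa using hAh
    | succ i => simpa using hherm i.succ 1
  have hPh : ∀ j, (P j).IsHermitian := by
    intro j
    apply SDB.famKron_isHermitian
    intro i
    induction i using Fin.cases with
    | zero => simpa using hSh
    | succ i =>
        simp only [Fin.cases_succ]
        split
        · exact hherm i.succ 0
        · exact Matrix.isHermitian_one
  have hG2 : G * G = famKron (Fin.cases (A * A) fun i => K i.succ 1 * K i.succ 1) := by
    rw [hG, SDB.famKron_mul]
    refine congrArg famKron (funext fun j => ?_)
    induction j using Fin.cases <;> simp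
  have hP2 : ∀ j, P j * P j
      = famKron (Fin.cases (S * S)
          fun i => if i = j then K i.succ 0 * K i.succ 0 else 1) := by
    intro j
    show famKron _ * famKron _ = _
    rw [SDB.famKron_mul]
    refine congrArg famKron (funext fun i => ?_)
    induction i using Fin.cases with
    | zero => simp
    | succ i =>
        simp only [Fin.cases_succ]
        split <;> simp
  have hAApsd := SDB.herm_sq_psd hAh
  have hSSpsd := SDB.herm_sq_psd hSh
  have hKK : ∀ j x, (K j x * K j x).PosSemidef := fun j x => SDB.herm_sq_psd (hherm j x)
  have hT1 : (famKron (Fin.cases (A * A) fun _ : Fin n => 1) - G * G).PosSemidef := by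
    rw [hG2]
    apply SDB.famKron_mono
    · intro j
      induction j using Fin.cases with
      | zero => simpa using hAApsd
      | succ i => simpa using hKK i.succ 1
    · intro j
      induction j using Fin.cases with
      | zero => simpa using Matrix.PosSemidef.zero
      | succ i => simpa using hsq i.succ 1
  have hT2 : ∀ j, (famKron (Fin.cases (S * S) fun _ : Fin n => 1)
      - P j * P j).PosSemidef := by
    intro j
    rw [hP2 j]
    apply SDB.famKron_mono
    · intro i
      induction i using Fin.cases with
      | zero => simpa using hSSpsd
      | succ i =>
          simp only [Fin.cases_succ]
          split
          · exact hKK i.succ 0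
          · exact Matrix.PosSemidef.one
    · intro i
      induction i using Fin.cases with
      | zero => simpa using Matrix.PosSemidef.zero
      | succ i =>
          simp only [Fin.cases_succ]
          split
          · exact hsq i.succ 0
          · simpa using Matrix.PosSemidef.zero
  have hQ : ((4 : ℂ) • (1 : Matrix (Fin (d 0)) (Fin (d 0)) ℂ) - A * A - S * S)
      = ((1 - K 0 0 * K 0 0) + (1 - K 0 0 * K 0 0))
        + ((1 - K 0 1 * K 0 1) + (1 - K 0 1 * K 0 1)) := by
    rw [hA, hS]
    simp only [Matrix.mul_sub, Matrix.sub_mul, Matrix.mul_add, Matrix.add_mul]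
    module
  have hT3 : ((4 : ℂ) • (1 : Matrix ((j : Fin (n + 1)) → Fin (d j))
        ((j : Fin (n + 1)) → Fin (d j)) ℂ)
      - famKron (Fin.cases (A * A) fun _ : Fin n => 1)
      - famKron (Fin.cases (S * S) fun _ : Fin n => 1)).PosSemidef := by
    have heq : (4 : ℂ) • (1 : Matrix ((j : Fin (n + 1)) → Fin (d j))
          ((j : Fin (n + 1)) → Fin (d j)) ℂ)
        - famKron (Fin.cases (A * A) fun _ : Fin n => 1)
        - famKron (Fin.cases (S * S) fun _ : Fin n => 1)
        = famKron (Fin.cases ((4 : ℂ) • 1 - A * A - S * S) fun _ : Fin n => 1) := by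
      rw [SDB.famKron_cases_sub, SDB.famKron_cases_sub, SDB.famKron_cases_smul,
        ← SDB.one_eq_famKron_cases]
    rw [heq]
    apply SDB.famKron_posSemidef
    intro j
    induction j using Fin.cases with
    | zero =>
        rw [Fin.cases_zero, hQ]
        exact ((hsq 0 0).add (hsq 0 0)).add ((hsq 0 1).add (hsq 0 1))
    | succ i => simpa using Matrix.PosSemidef.one
  have hR : ∀ j, ((4 : ℂ) • (1 : Matrix ((j : Fin (n + 1)) → Fin (d j))
      ((j : Fin (n + 1)) → Fin (d j)) ℂ) - G * G - P j * P j).PosSemidef := by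
    intro j
    have heq : (4 : ℂ) • (1 : Matrix ((j : Fin (n + 1)) → Fin (d j))
          ((j : Fin (n + 1)) → Fin (d j)) ℂ) - G * G - P j * P j
        = (famKron (Fin.cases (A * A) fun _ : Fin n => 1) - G * G)
          + (famKron (Fin.cases (S * S) fun _ : Fin n => 1) - P j * P j)
          + ((4 : ℂ) • 1 - famKron (Fin.cases (A * A) fun _ : Fin n => 1)
              - famKron (Fin.cases (S * S) fun _ : Fin n => 1)) := by
      abel
    rw [heq]
    exact (hT1.add (hT2 j)).add hT3
  set c : ℂ := ((Real.sqrt 2 : ℝ) : ℂ) with hc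
  have hc2 : c * c = 2 := by
    rw [hc, ← Complex.ofReal_mul, Real.mul_self_sqrt (by norm_num)]
    norm_num
  have hcoe : ((2 * Real.sqrt 2 * n : ℝ) : ℂ) = 2 * c * n := by
    rw [hc]; push_cast; ring
  have honeh : (c • (1 : Matrix ((j : Fin (n + 1)) → Fin (d j))
      ((j : Fin (n + 1)) → Fin (d j)) ℂ)).IsHermitian := by
    rw [Matrix.IsHermitian, Matrix.conjTranspose_smul,
      (Matrix.isHermitian_one (n := (j : Fin (n + 1)) → Fin (d j))).eq]
    rw [hc, Complex.star_def, Complex.conj_ofReal]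
  -- invertible positive scalar
  have hrpos : (0 : ℝ) ≤ (2 * Real.sqrt 2)⁻¹ := by positivity
  have hrinv : (((2 * Real.sqrt 2)⁻¹ : ℝ) : ℂ) * (2 * c) = 1 := by
    have h2 : (2 * Real.sqrt 2 : ℝ) ≠ 0 := by positivity
    have h3 : (2 * c) = ((2 * Real.sqrt 2 : ℝ) : ℂ) := by rw [hc]; push_cast; ring
    rw [h3, ← Complex.ofReal_mul, inv_mul_cancel₀ h2, Complex.ofReal_one]
  constructor
  · -- upper bound
    have hsq1 : ((c • 1 - G) * (c • 1 - G)).PosSemidef :=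
      SDB.herm_sq_psd (honeh.sub hGh)
    have hsq2 : ∀ j, ((c • 1 + P j) * (c • 1 + P j)).PosSemidef := fun j =>
      SDB.herm_sq_psd (honeh.add (hPh j))
    have sumEq : ∑ j : Fin n, ((c • 1 + P j) * (c • 1 + P j)
          + ((4 : ℂ) • 1 - G * G - P j * P j))
        = ((6 : ℂ) * n) • 1 + (2 * c) • (∑ j, P j) - (n : ℂ) • (G * G) := by
      have hexp : ∀ j : Fin n, (c • (1 : Matrix ((j : Fin (n + 1)) → Fin (d j))
            ((j : Fin (n + 1)) → Fin (d j)) ℂ) + P j) * (c • 1 + P j)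
            + ((4 : ℂ) • 1 - G * G - P j * P j)
          = (6 : ℂ) • 1 + (2 * c) • P j - G * G := by
        intro j
        have h1 : (c • (1 : Matrix ((j : Fin (n + 1)) → Fin (d j))
              ((j : Fin (n + 1)) → Fin (d j)) ℂ) + P j) * (c • 1 + P j)
            = (2 : ℂ) • 1 + c • P j + c • P j + P j * P j := by
          simp only [add_mul, mul_add, sub_mul, mul_sub, smul_mul_assoc, mul_smul_comm,
              smul_add, smul_sub, one_mul, mul_one, smul_smul, hc2]
          module
        rw [h1]; module
      rw [Finset.sum_congr rfl fun j _ => hexp j]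
      rw [Finset.sum_sub_distrib, Finset.sum_add_distrib,
        Finset.sum_const, Finset.sum_const, Finset.card_univ, Fintype.card_fin,
        ← Finset.smul_sum,
        ← Nat.cast_smul_eq_nsmul ℂ n ((6 : ℂ) • (1 : Matrix ((j : Fin (n + 1)) → Fin (d j))
          ((j : Fin (n + 1)) → Fin (d j)) ℂ)),
        ← Nat.cast_smul_eq_nsmul ℂ n (G * G), smul_smul]
      module
    have keyU : (2 * c) • ((2 * c * (n : ℂ)) • 1 - B')
        = (n : ℂ) • ((c • 1 - G) * (c • 1 - G))
          + ∑ j, ((c • 1 + P j) * (c • 1 + P j)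
            + ((4 : ℂ) • 1 - G * G - P j * P j)) := by
      rw [hB', sumEq]
      have hGexp : (c • (1 : Matrix ((j : Fin (n + 1)) → Fin (d j))
            ((j : Fin (n + 1)) → Fin (d j)) ℂ) - G) * (c • 1 - G)
          = (2 : ℂ) • 1 - c • G - c • G + G * G := by
        simp only [add_mul, mul_add, sub_mul, mul_sub, smul_mul_assoc, mul_smul_comm,
            smul_add, smul_sub, one_mul, mul_one, smul_smul, hc2]
        module
      rw [hGexp]
      have hs : (2 * c) • ((2 * c * (n : ℂ)) • (1 : Matrix ((j : Fin (n + 1)) → Fin (d j))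
            ((j : Fin (n + 1)) → Fin (d j)) ℂ)) = ((8 : ℂ) * n) • 1 := by
        rw [smul_smul]
        congr 1
        calc 2 * c * (2 * c * (n : ℂ)) = (c * c) * (4 * n) := by ring
          _ = 2 * (4 * n) := by rw [hc2]
          _ = 8 * n := by ring
      rw [smul_sub, hs]
      module
    have hXpsd : ((2 * c) • ((2 * c * (n : ℂ)) • 1 - B')).PosSemidef := by
      rw [keyU]
      refine Matrix.PosSemidef.add ?_ ?_
      · have := SDB.posSemidef_real_smul hsq1 (Nat.cast_nonneg n)
        simpa using this
      · exact SDB.posSemidef_sum _ _ fun j _ => (hsq2 j).add (hR j)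
    have hfin : ((2 * Real.sqrt 2 * n : ℝ) : ℂ) • (1 : Matrix ((j : Fin (n + 1)) → Fin (d j))
          ((j : Fin (n + 1)) → Fin (d j)) ℂ) - B'
        = (((2 * Real.sqrt 2)⁻¹ : ℝ) : ℂ) • ((2 * c) • ((2 * c * (n : ℂ)) • 1 - B')) := by
      rw [smul_smul, hrinv, one_smul, hcoe]
    rw [hfin]
    exact SDB.posSemidef_real_smul hXpsd hrpos
  · -- lower bound
    have hsq1 : ((c • 1 + G) * (c • 1 + G)).PosSemidef :=
      SDB.herm_sq_psd (honeh.add hGh)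
    have hsq2 : ∀ j, ((c • 1 - P j) * (c • 1 - P j)).PosSemidef := fun j =>
      SDB.herm_sq_psd (honeh.sub (hPh j))
    have sumEq : ∑ j : Fin n, ((c • 1 - P j) * (c • 1 - P j)
          + ((4 : ℂ) • 1 - G * G - P j * P j))
        = ((6 : ℂ) * n) • 1 - (2 * c) • (∑ j, P j) - (n : ℂ) • (G * G) := by
      have hexp : ∀ j : Fin n, (c • (1 : Matrix ((j : Fin (n + 1)) → Fin (d j))
            ((j : Fin (n + 1)) → Fin (d j)) ℂ) - P j) * (c • 1 - P j)
            + ((4 : ℂ) • 1 - G * G - P j * P j)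
          = (6 : ℂ) • 1 - (2 * c) • P j - G * G := by
        intro j
        have h1 : (c • (1 : Matrix ((j : Fin (n + 1)) → Fin (d j))
              ((j : Fin (n + 1)) → Fin (d j)) ℂ) - P j) * (c • 1 - P j)
            = (2 : ℂ) • 1 - c • P j - c • P j + P j * P j := by
          simp only [add_mul, mul_add, sub_mul, mul_sub, smul_mul_assoc, mul_smul_comm,
              smul_add, smul_sub, one_mul, mul_one, smul_smul, hc2]
          module
        rw [h1]; module
      rw [Finset.sum_congr rfl fun j _ => hexp j]
      rw [Finset.sum_sub_distrib, Finset.sum_sub_distrib,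
        Finset.sum_const, Finset.sum_const, Finset.card_univ, Fintype.card_fin,
        ← Finset.smul_sum,
        ← Nat.cast_smul_eq_nsmul ℂ n ((6 : ℂ) • (1 : Matrix ((j : Fin (n + 1)) → Fin (d j))
          ((j : Fin (n + 1)) → Fin (d j)) ℂ)),
        ← Nat.cast_smul_eq_nsmul ℂ n (G * G), smul_smul]
      module
    have keyL : (2 * c) • (B' + (2 * c * (n : ℂ)) • 1)
        = (n : ℂ) • ((c • 1 + G) * (c • 1 + G))
          + ∑ j, ((c • 1 - P j) * (c • 1 - P j)
            + ((4 : ℂ) • 1 - G * G - P j * P j)) := by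
      rw [hB', sumEq]
      have hGexp : (c • (1 : Matrix ((j : Fin (n + 1)) → Fin (d j))
            ((j : Fin (n + 1)) → Fin (d j)) ℂ) + G) * (c • 1 + G)
          = (2 : ℂ) • 1 + c • G + c • G + G * G := by
        simp only [add_mul, mul_add, sub_mul, mul_sub, smul_mul_assoc, mul_smul_comm,
            smul_add, smul_sub, one_mul, mul_one, smul_smul, hc2]
        module
      rw [hGexp]
      have hs : (2 * c) • ((2 * c * (n : ℂ)) • (1 : Matrix ((j : Fin (n + 1)) → Fin (d j))
            ((j : Fin (n + 1)) → Fin (d j)) ℂ)) = ((8 : ℂ) * n) • 1 := by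
        rw [smul_smul]
        congr 1
        calc 2 * c * (2 * c * (n : ℂ)) = (c * c) * (4 * n) := by ring
          _ = 2 * (4 * n) := by rw [hc2]
          _ = 8 * n := by ring
      rw [smul_add, hs]
      module
    have hXpsd : ((2 * c) • (B' + (2 * c * (n : ℂ)) • 1)).PosSemidef := by
      rw [keyL]
      refine Matrix.PosSemidef.add ?_ ?_
      · have := SDB.posSemidef_real_smul hsq1 (Nat.cast_nonneg n)
        simpa using this
      · exact SDB.posSemidef_sum _ _ fun j _ => (hsq2 j).add (hR j)
    have hfin : B' + ((2 * Real.sqrt 2 * n : ℝ) : ℂ) • (1 : Matrix ((j : Fin (n + 1)) → Fin (d j))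
          ((j : Fin (n + 1)) → Fin (d j)) ℂ)
        = (((2 * Real.sqrt 2)⁻¹ : ℝ) : ℂ) • ((2 * c) • (B' + (2 * c * (n : ℂ)) • 1)) := by
      rw [smul_smul, hrinv, one_smul, hcoe]
    rw [hfin]
    exact SDB.posSemidef_real_smul hXpsd hrpos


end
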